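/- (Determinant of the Kerr metric in Boyer–Lindquist coordinates.) The 4×4 matrix g defined in the context satisfies det g = −|q|⁴ sin²θ. In particular |det g| = |q|⁴ sin²θ. -/

import Mathlib

open Real

/-- Determinant of the Kerr metric in Boyer–Lindquist coordinates:
`det g = −|q|⁴ sin²θ`, so `|det g| = |q|⁴ sin²θ`. -/
theorem kerr_BL_determinant (m a r θ q2 Δ Sigma2 : ℝ)
    (hq2 : q2 = r ^ 2 + a ^ 2 * Real.cos θ ^ 2)
    (hΔ : Δ = r ^ 2 - 2 * m * r + a ^ 2)
    (hSigma : Sigma2 = (r ^ 2 + a ^ 2) ^ 2 - a ^ 2 * Real.sin θ ^ 2 * Δ)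
    (hΔ0 : Δ ≠ 0) (hs : Real.sin θ ≠ 0) (hq0 : q2 ≠ 0)
    (g : Matrix (Fin 4) (Fin 4) ℝ)
    (hg : g = !![
      -((Δ - a ^ 2 * Real.sin θ ^ 2) / q2), 0, 0,
        -(2 * a * m * r * Real.sin θ ^ 2 / q2);
      0, q2 / Δ, 0, 0;
      0, 0, q2, 0;
      -(2 * a * m * r * Real.sin θ ^ 2 / q2), 0, 0,
        Sigma2 * Real.sin θ ^ 2 / q2]) :
    g.det = -(q2 ^ 2 * Real.sin θ ^ 2) ∧ |g.det| = q2 ^ 2 * Real.sin θ ^ 2 := by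
  have hc : Real.cos θ ^ 2 = 1 - Real.sin θ ^ 2 := by
    have := Real.sin_sq_add_cos_sq θ; linarith
  have hdet : g.det = -(q2 ^ 2 * Real.sin θ ^ 2) := by
    subst hg
    simp [Matrix.det_succ_row_zero, Fin.sum_univ_succ, Fin.castSucc, Fin.castAdd, Fin.castLE, Fin.succAbove]
    subst hq2 hΔ hSigma
    field_simp
    rw [div_eq_iff (by contrapose! hΔ0; linarith)]
    rw [hc]; ring
  refine ⟨hdet, ?_⟩
  rw [hdet, abs_neg, abs_of_nonneg (by positivity)]
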